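/- Let 𝓛: ℝᵖ → ℝ be differentiable, β₀ ∈ ℝᵖ with support S of size s₀, and suppose the restricted strong convexity condition ⟨∇𝓛(β) − ∇𝓛(β₀), β−β₀⟩ ≥ α‖β−β₀‖₂² − τ√(log p/n)‖β−β₀‖₁ holds for all β in a feasible set Ω containing β₀. Let β̃ ∈ Ω satisfy the first-order stationarity condition ⟨∇𝓛(β̃) + λv, β₀ − β̃⟩ ≥ 0 for some v ∈ ∂‖β̃‖₁, where λ ≥ 4·max{‖∇𝓛(β₀)‖_∞, τ√(log p/n)}. Then ‖β̃−β₀‖₂ ≤ (3/2)·√s₀·λ/α and ‖β̃−β₀‖₁ ≤ 6 s₀ λ/α. -/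
import Mathlib


open scoped BigOperators
open RealInnerProductSpace

/-- The ℓ¹ norm of a vector in `ℝᵖ`. -/
noncomputable def norm1 {p : ℕ} (v : EuclideanSpace ℝ (Fin p)) : ℝ := ∑ i, |v i|

/-- The ℓ∞ norm of a vector in `ℝᵖ`. -/
noncomputable def normInf {p : ℕ} (v : EuclideanSpace ℝ (Fin p)) : ℝ := ⨆ i, |v i|

lemma inner_le_normInf_mul_norm1 {p : ℕ} (g x : EuclideanSpace ℝ (Fin p)) :
    |⟪g, x⟫| ≤ normInf g * norm1 x := by
  have hIP : ⟪g, x⟫ = ∑ i, g i * x i := by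
    simp [PiLp.inner_apply, RCLike.inner_apply, mul_comm]
  rw [hIP, norm1, normInf]
  calc |∑ i, g i * x i| ≤ ∑ i, |g i * x i| := Finset.abs_sum_le_sum_abs _ _
    _ ≤ ∑ i, (⨆ j, |g j|) * |x i| := by
        refine Finset.sum_le_sum fun i _ => ?_
        rw [abs_mul]
        exact mul_le_mul_of_nonneg_right
          (le_ciSup (f := fun j => |g j|) (Set.Finite.bddAbove (Set.finite_range _)) i)
          (abs_nonneg _)
    _ = (⨆ j, |g j|) * ∑ i, |x i| := by rw [Finset.mul_sum]

set_option maxHeartbeats 2000000 in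
/-- ℓ₁/ℓ₂ error bounds for a stationary point of a penalized (possibly
non-convex) program under the restricted strong convexity condition with tolerance
`τ√(log p/n)·‖·‖₁`.  Here `v` is a subgradient of `‖·‖₁` at `β̃`, and
`λ ≥ 4·max{‖∇𝓛(β₀)‖_∞, τ√(log p/n)}`.  Then `‖β̃−β₀‖₂ ≤ (3/2)√s₀ λ/α` and
`‖β̃−β₀‖₁ ≤ 6 s₀ λ/α`. -/
theorem stmt11 {p : ℕ} (n : ℕ) (hn : 0 < n) (hp : 0 < p)
    (L : EuclideanSpace ℝ (Fin p) → ℝ) (hL : Differentiable ℝ L)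
    (Ω : Set (EuclideanSpace ℝ (Fin p)))
    (β₀ : EuclideanSpace ℝ (Fin p)) (hβ₀Ω : β₀ ∈ Ω)
    (α τ lam : ℝ) (hα : 0 < α) (hτ : 0 < τ) (hlam : 0 < lam)
    (s₀ : ℕ) (hs₀ : s₀ = (Finset.univ.filter fun i => β₀ i ≠ 0).card)
    (hRSC : ∀ β ∈ Ω,
      ⟪gradient L β - gradient L β₀, β - β₀⟫
        ≥ α * ‖β - β₀‖ ^ 2 - τ * Real.sqrt (Real.log p / n) * norm1 (β - β₀))
    (βt : EuclideanSpace ℝ (Fin p)) (hβt : βt ∈ Ω)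
    (v : EuclideanSpace ℝ (Fin p))
    (hv : ∀ w, norm1 w - norm1 βt ≥ ⟪v, w - βt⟫)
    (hstat : ⟪gradient L βt + lam • v, β₀ - βt⟫ ≥ 0)
    (hlam_ge : lam ≥ 4 * max (normInf (gradient L β₀)) (τ * Real.sqrt (Real.log p / n))) :
    ‖βt - β₀‖ ≤ (3 / 2) * Real.sqrt s₀ * lam / α ∧
      norm1 (βt - β₀) ≤ 6 * s₀ * lam / α := by
  set Δ : EuclideanSpace ℝ (Fin p) := βt - β₀ with hΔdef
  set g₀ := gradient L β₀ with hg₀def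
  set κ := τ * Real.sqrt (Real.log p / n) with hκdef
  set S : Finset (Fin p) := Finset.univ.filter fun i => β₀ i ≠ 0 with hSdef
  set a := ∑ i ∈ S, |Δ i| with hadef
  set b := ∑ i ∈ Sᶜ, |Δ i| with hbdef
  have ha0 : 0 ≤ a := Finset.sum_nonneg fun i _ => abs_nonneg _
  have hb0 : 0 ≤ b := Finset.sum_nonneg fun i _ => abs_nonneg _
  have hκ0 : 0 ≤ κ := mul_nonneg hτ.le (Real.sqrt_nonneg _)
  -- λ/4 bounds
  have hinf4 : normInf g₀ ≤ lam / 4 := by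
    have := le_max_left (normInf g₀) κ
    have h' := le_max_right (normInf g₀) κ
    simp only [ge_iff_le] at hlam_ge
    have : 4 * normInf g₀ ≤ lam := le_trans (by linarith [le_max_left (normInf g₀) κ]) hlam_ge
    linarith
  have hκ4 : κ ≤ lam / 4 := by
    have : 4 * κ ≤ lam := le_trans (by linarith [le_max_right (normInf g₀) κ]) hlam_ge
    linarith
  -- norm1 split
  have h1 : norm1 Δ = a + b := by
    rw [norm1, hadef, hbdef, Finset.sum_add_sum_compl]
  have hn1 : 0 ≤ norm1 Δ := by rw [h1]; linarith
  -- ℓ¹ comparison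
  have h2 : norm1 β₀ - norm1 βt ≤ a - b := by
    have e1 : norm1 β₀ - norm1 βt = ∑ i, (|β₀ i| - |βt i|) := by
      rw [norm1, norm1, Finset.sum_sub_distrib]
    rw [e1, ← Finset.sum_add_sum_compl S (fun i => |β₀ i| - |βt i|)]
    have hS : ∑ i ∈ S, (|β₀ i| - |βt i|) ≤ a := by
      refine Finset.sum_le_sum fun i _ => ?_
      have hΔi : Δ i = βt i - β₀ i := by simp [hΔdef]
      rw [hΔi]
      have h1' := abs_sub_abs_le_abs_sub (β₀ i) (βt i)
      have h2' := abs_sub_comm (β₀ i) (βt i)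
      rw [h2'] at h1'
      linarith
    have hSc : ∑ i ∈ Sᶜ, (|β₀ i| - |βt i|) ≤ -b := by
      rw [hbdef, ← Finset.sum_neg_distrib]
      refine Finset.sum_le_sum fun i hi => ?_
      have hz : β₀ i = 0 := by
        simp only [hSdef, Finset.mem_compl, Finset.mem_filter, Finset.mem_univ,
          true_and, not_not] at hi
        exact hi
      have hΔi : Δ i = βt i - β₀ i := by simp [hΔdef]
      rw [hΔi, hz]
      simp
    linarith
  -- Cauchy–Schwarz on S
  have hnormsq : ‖Δ‖ ^ 2 = ∑ i, (Δ i) ^ 2 := by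
    rw [EuclideanSpace.norm_eq, Real.sq_sqrt (by positivity)]
    simp [sq_abs]
  have h4 : a ≤ Real.sqrt s₀ * ‖Δ‖ := by
    have hcs : a ^ 2 ≤ (s₀ : ℝ) * ‖Δ‖ ^ 2 := by
      have hCS := Finset.sum_mul_sq_le_sq_mul_sq S (fun _ => (1:ℝ)) (fun i => |Δ i|)
      simp only [one_mul, one_pow, Finset.sum_const, nsmul_eq_mul, mul_one] at hCS
      have hsub : ∑ i ∈ S, |Δ i| ^ 2 ≤ ∑ i, (Δ i) ^ 2 := by
        have : ∑ i ∈ S, |Δ i| ^ 2 = ∑ i ∈ S, (Δ i) ^ 2 := by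
          refine Finset.sum_congr rfl fun i _ => sq_abs _
        rw [this]
        exact Finset.sum_le_sum_of_subset_of_nonneg (Finset.subset_univ S)
          (fun i _ _ => sq_nonneg _)
      calc a ^ 2 ≤ (S.card : ℝ) * ∑ i ∈ S, |Δ i| ^ 2 := hCS
        _ ≤ (s₀ : ℝ) * ‖Δ‖ ^ 2 := by
            rw [hs₀, hnormsq]
            exact mul_le_mul_of_nonneg_left hsub (by positivity)
    have he : a = Real.sqrt (a ^ 2) := (Real.sqrt_sq ha0).symm
    rw [he]
    calc Real.sqrt (a ^ 2) ≤ Real.sqrt ((s₀:ℝ) * ‖Δ‖ ^ 2) := Real.sqrt_le_sqrt hcs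
      _ = Real.sqrt s₀ * ‖Δ‖ := by
          rw [Real.sqrt_mul (by positivity), Real.sqrt_sq (norm_nonneg _)]
  -- stationarity rearranged
  have hstat' : ⟪gradient L βt, Δ⟫ + lam * ⟪v, Δ⟫ ≤ 0 := by
    have e : β₀ - βt = -Δ := by rw [hΔdef, neg_sub]
    rw [e, inner_neg_right, inner_add_left, real_inner_smul_left] at hstat
    linarith
  -- subgradient
  have hsub : -(norm1 β₀ - norm1 βt) ≤ ⟪v, Δ⟫ := by
    have hw := hv β₀
    have e : β₀ - βt = -Δ := by rw [hΔdef, neg_sub]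
    rw [e, inner_neg_right] at hw
    linarith
  -- RSC
  have hRSC' : α * ‖Δ‖ ^ 2 - κ * norm1 Δ ≤ ⟪gradient L βt, Δ⟫ - ⟪g₀, Δ⟫ := by
    have h := hRSC βt hβt
    rw [inner_sub_left] at h
    exact h
  -- gradient term
  have hg : |⟪g₀, Δ⟫| ≤ lam / 4 * norm1 Δ := by
    calc |⟪g₀, Δ⟫| ≤ normInf g₀ * norm1 Δ := inner_le_normInf_mul_norm1 _ _
      _ ≤ lam / 4 * norm1 Δ := mul_le_mul_of_nonneg_right hinf4 hn1
  -- main inequality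
  have t1 : ⟪gradient L βt, Δ⟫ ≤ lam * (a - b) := by
    have h' : lam * (-(norm1 β₀ - norm1 βt)) ≤ lam * ⟪v, Δ⟫ :=
      mul_le_mul_of_nonneg_left hsub hlam.le
    rw [mul_neg] at h'
    have h'' : lam * (norm1 β₀ - norm1 βt) ≤ lam * (a - b) :=
      mul_le_mul_of_nonneg_left h2 hlam.le
    linarith
  have t2 : -⟪g₀, Δ⟫ ≤ lam / 4 * (a + b) := by
    have := neg_abs_le (⟪g₀, Δ⟫)
    rw [h1] at hg
    linarith
  have t3 : κ * norm1 Δ ≤ lam / 4 * (a + b) := by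
    rw [h1]
    exact mul_le_mul_of_nonneg_right hκ4 (by linarith)
  have hmain : α * ‖Δ‖ ^ 2 ≤ (3/2) * lam * a - (1/2) * lam * b := by
    have hring : lam * (a - b) + lam / 4 * (a + b) + lam / 4 * (a + b)
        = (3/2) * lam * a - (1/2) * lam * b := by ring
    linarith
  have hnorm0 : 0 ≤ α * ‖Δ‖ ^ 2 := by positivity
  -- cone condition
  have hcone : b ≤ 3 * a := by
    have hb3 : lam * b ≤ lam * (3 * a) := by linarith
    exact le_of_mul_le_mul_left hb3 hlam
  -- ℓ₂ bound
  have hl2 : ‖Δ‖ ≤ (3 / 2) * Real.sqrt s₀ * lam / α := by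
    have key : α * ‖Δ‖ ^ 2 ≤ (3/2) * lam * (Real.sqrt s₀ * ‖Δ‖) := by
      have hm := mul_le_mul_of_nonneg_left h4 (by linarith : (0:ℝ) ≤ (3/2) * lam)
      have hbpos : 0 ≤ (1/2) * lam * b := by positivity
      linarith
    rcases eq_or_lt_of_le (norm_nonneg Δ) with h0 | h0
    · rw [← h0]; positivity
    · rw [le_div_iff₀ hα]
      have h' : (‖Δ‖ * α) * ‖Δ‖ ≤ ((3/2) * Real.sqrt s₀ * lam) * ‖Δ‖ := by
        have e1 : (‖Δ‖ * α) * ‖Δ‖ = α * ‖Δ‖ ^ 2 := by ring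
        have e2 : ((3/2) * Real.sqrt s₀ * lam) * ‖Δ‖ = (3/2) * lam * (Real.sqrt s₀ * ‖Δ‖) := by
          ring
        rw [e1, e2]; exact key
      exact le_of_mul_le_mul_right h' h0
  refine ⟨hl2, ?_⟩
  -- ℓ₁ bound
  have hsq : Real.sqrt s₀ * Real.sqrt s₀ = (s₀ : ℝ) :=
    Real.mul_self_sqrt (by positivity)
  have h4a : a ≤ Real.sqrt s₀ * ((3 / 2) * Real.sqrt s₀ * lam / α) :=
    h4.trans (mul_le_mul_of_nonneg_left hl2 (Real.sqrt_nonneg _))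
  have hfin : 4 * (Real.sqrt s₀ * ((3 / 2) * Real.sqrt s₀ * lam / α)) = 6 * s₀ * lam / α := by
    have e : 4 * (Real.sqrt s₀ * ((3 / 2) * Real.sqrt s₀ * lam / α))
        = 6 * (Real.sqrt s₀ * Real.sqrt s₀) * lam / α := by ring
    rw [e, hsq]
  rw [h1]
  linarith
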